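/- For every fixed integer δ ≥ 0, Σ_{(δ1,δ2,δ3)} 6^{δ1} · 4^{δ2} · 2^{δ3} · S_{δ1}(d) · S_{δ2}(d) · S_{δ3}(d) = (4d³)^δ/δ! + O(d^{3δ−1}) as d → ∞, where the sum ranges over all ordered triples (δ1, δ2, δ3) of nonnegative integers with δ1 + δ2 + δ3 = δ. -/

import Mathlib

open Filter Asymptotics

open Finset in
lemma sum_pow_lb (m : ℕ) : ∀ d : ℕ, (d:ℝ)^(m+1)/(m+1) ≤ ∑ i ∈ Finset.Icc 1 d, (i:ℝ)^m := by
  intro d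
  induction d with
  | zero => simp
  | succ d ih =>
    rw [Finset.sum_Icc_succ_top (by omega)]
    have ha : (0:ℝ) < (d:ℝ) + 1 := by positivity
    have hb := one_add_mul_le_pow (a := -1/((d:ℝ)+1)) (by
      rw [neg_div]; nlinarith [div_le_one_of_le₀ (by linarith : (1:ℝ) ≤ (d:ℝ)+1) ha.le]) (m+1)
    have h2 : (1 + -1/((d:ℝ)+1)) = (d:ℝ)/((d:ℝ)+1) := by field_simp; ring
    rw [h2, div_pow] at hb
    push_cast
    rw [div_le_iff₀ (by positivity : (0:ℝ) < (m:ℝ)+1)]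
    have hpow : (0:ℝ) < ((d:ℝ)+1)^(m+1) := by positivity
    calc ((d:ℝ)+1)^(m+1) = (1 + (↑(m+1)) * (-1/((d:ℝ)+1))) * ((d:ℝ)+1)^(m+1) + (↑(m+1)) * ((d:ℝ)+1)^m := by
          push_cast; field_simp; ring
      _ ≤ (d:ℝ)^(m+1)/((d:ℝ)+1)^(m+1) * ((d:ℝ)+1)^(m+1) + (↑(m+1)) * ((d:ℝ)+1)^m := by
          push_cast at hb ⊢; nlinarith
      _ = (d:ℝ)^(m+1) + (↑(m+1)) * ((d:ℝ)+1)^m := by field_simp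
      _ ≤ (∑ i ∈ Finset.Icc 1 d, (i:ℝ)^m + ((d:ℝ)+1)^m) * (↑m+1) := by
          have ih' : (d:ℝ)^(m+1) ≤ (∑ i ∈ Finset.Icc 1 d, (i:ℝ)^m) * ((m:ℝ)+1) :=
            (div_le_iff₀ (by positivity)).mp ih
          push_cast; nlinarith
lemma sum_pow_ub (m : ℕ) : ∀ d : ℕ, ∑ i ∈ Finset.Icc 1 d, (i:ℝ)^m ≤ ((d:ℝ)+1)^(m+1)/(m+1) := by
  intro d
  induction d with
  | zero => simp; positivity
  | succ d ih =>
    rw [Finset.sum_Icc_succ_top (by omega)]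
    have ha : (0:ℝ) < (d:ℝ) + 1 := by positivity
    have hb := one_add_mul_le_pow (a := 1/((d:ℝ)+1))
      (le_trans (by norm_num : (-2:ℝ) ≤ 0) (by positivity)) (m+1)
    have h2 : (1 + 1/((d:ℝ)+1)) = ((d:ℝ)+2)/((d:ℝ)+1) := by field_simp; ring
    rw [h2, div_pow] at hb
    have key : ((d:ℝ)+1)^(m+1) + ((m:ℝ)+1) * ((d:ℝ)+1)^m ≤ ((d:ℝ)+2)^(m+1) := by
      have hb' := mul_le_mul_of_nonneg_right hb (by positivity : (0:ℝ) ≤ ((d:ℝ)+1)^(m+1))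
      have heq : ((d:ℝ)+2)^(m+1) / ((d:ℝ)+1)^(m+1) * ((d:ℝ)+1)^(m+1) = ((d:ℝ)+2)^(m+1) := by
        field_simp
      rw [heq] at hb'
      push_cast at hb'
      have hexp : (1 + ((m:ℝ)+1)*(1/((d:ℝ)+1))) * ((d:ℝ)+1)^(m+1) =
          ((d:ℝ)+1)^(m+1) + ((m:ℝ)+1)*((d:ℝ)+1)^m := by
        rw [pow_succ]; field_simp
      rw [hexp] at hb'
      linarith
    have hmp : (0:ℝ) < (m:ℝ)+1 := by positivity
    push_cast
    rw [le_div_iff₀ hmp] at ih ⊢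
    have : ((d:ℝ) + 1 + 1) = (d:ℝ) + 2 := by ring
    rw [this]
    nlinarith
lemma bern_diff (m d : ℕ) : ((d:ℝ)+1)^(m+1) ≤ (d:ℝ)^(m+1) + ((m:ℝ)+1)*((d:ℝ)+1)^m := by
  have ha : (0:ℝ) < (d:ℝ) + 1 := by positivity
  have h1 : 1/((d:ℝ)+1) ≤ 1 := by rw [div_le_one ha]; linarith
  have h0 : (0:ℝ) ≤ 1/((d:ℝ)+1) := by positivity
  have hb := one_add_mul_le_pow (a := -1/((d:ℝ)+1)) (by rw [neg_div]; linarith) (m+1)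
  have h2 : (1 + -1/((d:ℝ)+1)) = (d:ℝ)/((d:ℝ)+1) := by field_simp; ring
  rw [h2, div_pow] at hb
  have hb' := mul_le_mul_of_nonneg_right hb (by positivity : (0:ℝ) ≤ ((d:ℝ)+1)^(m+1))
  have heq : (d:ℝ)^(m+1) / ((d:ℝ)+1)^(m+1) * ((d:ℝ)+1)^(m+1) = (d:ℝ)^(m+1) := by field_simp
  rw [heq] at hb'
  push_cast at hb'
  have hexp : (1 + ((m:ℝ)+1)*(-1/((d:ℝ)+1))) * ((d:ℝ)+1)^(m+1) =
      ((d:ℝ)+1)^(m+1) - ((m:ℝ)+1)*((d:ℝ)+1)^m := by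
    rw [pow_succ]; field_simp; ring
  rw [hexp] at hb'
  linarith

lemma sum_pow_err (m d : ℕ) (hd : 1 ≤ d) :
    |(∑ i ∈ Finset.Icc 1 d, (i:ℝ)^m) - (d:ℝ)^(m+1)/((m:ℝ)+1)| ≤ 2^m * (d:ℝ)^m := by
  have hd1 : (1:ℝ) ≤ (d:ℝ) := by exact_mod_cast hd
  have hmp : (0:ℝ) < (m:ℝ)+1 := by positivity
  rw [abs_le]
  constructor
  · have := sum_pow_lb m d
    push_cast at this
    nlinarith [pow_nonneg (by linarith : (0:ℝ) ≤ (d:ℝ)) m, pow_pos (by norm_num : (0:ℝ) < 2) m]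
  · have hub := sum_pow_ub m d
    have hbd := bern_diff m d
    have h1 : ((d:ℝ)+1)^m ≤ 2^m * (d:ℝ)^m := by
      rw [← mul_pow]
      exact pow_le_pow_left₀ (by positivity) (by linarith) m
    have : (∑ i ∈ Finset.Icc 1 d, (i:ℝ)^m) ≤ (d:ℝ)^(m+1)/((m:ℝ)+1) + ((d:ℝ)+1)^m := by
      refine hub.trans ?_
      rw [div_le_iff₀ hmp]
      push_cast
      have hdm := div_mul_cancel₀ ((d:ℝ)^(m+1)) hmp.ne'
      nlinarith [hdm]
    linarith


lemma trinomial (x y z : ℝ) (n : ℕ) :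
    ∑ a ∈ Finset.range (n+1), ∑ b ∈ Finset.range (n-a+1),
      ((n.choose a : ℝ) * ((n-a).choose b : ℝ)) * (x^a * y^b * z^(n-a-b))
    = (x+y+z)^n := by
  rw [show x+y+z = x+(y+z) by ring, add_pow]
  refine Finset.sum_congr rfl fun a ha => ?_
  rw [add_pow, Finset.mul_sum, Finset.sum_mul]
  refine Finset.sum_congr rfl fun b hb => ?_
  rw [show n-a-b = n-a-b from rfl]
  ring

lemma main_sum (δ d : ℕ) :
    ∑ a ∈ Finset.range (δ+1), ∑ b ∈ Finset.range (δ-a+1),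
      (6:ℝ)^a * 4^b * 2^(δ-a-b) * ((d:ℝ)^(3*a)/((3:ℝ)^a * (Nat.factorial a))) *
        ((d:ℝ)^(3*b)/((3:ℝ)^b * (Nat.factorial b))) *
        ((d:ℝ)^(3*(δ-a-b))/((3:ℝ)^(δ-a-b) * (Nat.factorial (δ-a-b))))
    = (4*(d:ℝ)^3)^δ / (Nat.factorial δ) := by
  have h := trinomial (6*(d:ℝ)^3) (4*(d:ℝ)^3) (2*(d:ℝ)^3) δ
  have hstep : ∑ a ∈ Finset.range (δ+1), ∑ b ∈ Finset.range (δ-a+1),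
      (6:ℝ)^a * 4^b * 2^(δ-a-b) * ((d:ℝ)^(3*a)/((3:ℝ)^a * (Nat.factorial a))) *
        ((d:ℝ)^(3*b)/((3:ℝ)^b * (Nat.factorial b))) *
        ((d:ℝ)^(3*(δ-a-b))/((3:ℝ)^(δ-a-b) * (Nat.factorial (δ-a-b))))
      = ∑ a ∈ Finset.range (δ+1), ∑ b ∈ Finset.range (δ-a+1),
        ((δ.choose a : ℝ) * ((δ-a).choose b : ℝ)) *
          ((6*(d:ℝ)^3)^a * (4*(d:ℝ)^3)^b * (2*(d:ℝ)^3)^(δ-a-b)) / ((3:ℝ)^δ * (Nat.factorial δ)) := by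
    refine Finset.sum_congr rfl fun a ha => Finset.sum_congr rfl fun b hb => ?_
    rw [Finset.mem_range] at ha hb
    have ha' : a ≤ δ := by omega
    have hb' : b ≤ δ - a := by omega
    set c := δ - a - b with hc
    have habc : a + b + c = δ := by omega
    have h1 := Nat.choose_mul_factorial_mul_factorial ha'
    have h2 := Nat.choose_mul_factorial_mul_factorial hb'
    have hfacN : Nat.factorial δ = δ.choose a * ((δ-a).choose b) *
        (Nat.factorial a * Nat.factorial b * Nat.factorial c) := by
      rw [← h1, ← h2]
      have : δ - a - b = c := rfl
      rw [this]
      ring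
    have hfacR : ((Nat.factorial δ : ℕ) : ℝ) = (δ.choose a : ℝ) * ((δ-a).choose b : ℝ) *
        ((Nat.factorial a : ℝ) * (Nat.factorial b : ℝ) * (Nat.factorial c : ℝ)) := by
      rw [hfacN]; push_cast; ring
    have h3 : (3:ℝ)^δ = 3^a * 3^b * 3^c := by
      rw [← habc, pow_add, pow_add]
    have hch1 : (0:ℝ) < (δ.choose a : ℝ) := by exact_mod_cast Nat.choose_pos ha'
    have hch2 : (0:ℝ) < ((δ-a).choose b : ℝ) := by exact_mod_cast Nat.choose_pos hb'
    rw [pow_mul, pow_mul, pow_mul, hfacR, h3, mul_pow, mul_pow, mul_pow]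
    have hfa : (0:ℝ) < (Nat.factorial a : ℝ) := by exact_mod_cast Nat.factorial_pos a
    have hfb : (0:ℝ) < (Nat.factorial b : ℝ) := by exact_mod_cast Nat.factorial_pos b
    have hfc : (0:ℝ) < (Nat.factorial c : ℝ) := by exact_mod_cast Nat.factorial_pos c
    field_simp
  rw [hstep]
  have : ∀ a ∈ Finset.range (δ+1), (∑ b ∈ Finset.range (δ-a+1),
      ((δ.choose a : ℝ) * ((δ-a).choose b : ℝ)) *
        ((6*(d:ℝ)^3)^a * (4*(d:ℝ)^3)^b * (2*(d:ℝ)^3)^(δ-a-b)) / ((3:ℝ)^δ * (Nat.factorial δ)))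
      = (∑ b ∈ Finset.range (δ-a+1),
      ((δ.choose a : ℝ) * ((δ-a).choose b : ℝ)) *
        ((6*(d:ℝ)^3)^a * (4*(d:ℝ)^3)^b * (2*(d:ℝ)^3)^(δ-a-b))) / ((3:ℝ)^δ * (Nat.factorial δ)) :=
    fun a _ => by rw [Finset.sum_div]
  rw [Finset.sum_congr rfl this, ← Finset.sum_div, h]
  have h12 : 6*(d:ℝ)^3 + 4*(d:ℝ)^3 + 2*(d:ℝ)^3 = 3 * (4*(d:ℝ)^3) := by ring
  rw [h12, mul_pow]
  have h3δ : ((3:ℝ)^δ) ≠ 0 := by positivity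
  field_simp

/-- `S k d = Σ_{d ≥ i₁ ≥ i₂ ≥ ⋯ ≥ i_k ≥ 1} i₁² i₂² ⋯ i_k²`, evaluated in `ℝ`,
with `S 0 d = 1`. -/
noncomputable def S : ℕ → ℕ → ℝ
  | 0, _ => 1
  | k + 1, d => ∑ i ∈ Finset.Icc 1 d, (i : ℝ) ^ 2 * S k i

lemma S_bound : ∀ k : ℕ, ∃ C : ℝ, 0 ≤ C ∧ ∀ d : ℕ, 1 ≤ d →
    |S k d - (d:ℝ)^(3*k)/((3:ℝ)^k * (Nat.factorial k))| ≤ C * (d:ℝ)^(3*k)/(d:ℝ) := by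
  intro k
  induction k with
  | zero =>
    refine ⟨0, le_refl 0, fun d hd => ?_⟩
    simp [S]
  | succ k ih =>
    obtain ⟨C, hC0, hC⟩ := ih
    set ck : ℝ := (3:ℝ)^k * (Nat.factorial k) with hckdef
    have hck : (0:ℝ) < ck := by positivity
    refine ⟨C + 2^(3*k+2)/ck, by positivity, fun d hd => ?_⟩
    have hd0 : (0:ℝ) < (d:ℝ) := by exact_mod_cast hd
    set A : ℝ := ∑ i ∈ Finset.Icc 1 d, (i:ℝ)^(3*k+2) with hAdef
    have e1 : ∑ i ∈ Finset.Icc 1 d, (i:ℝ)^2 * (S k i - (i:ℝ)^(3*k)/ck)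
        = S (k+1) d - A/ck := by
      rw [show S (k+1) d = ∑ i ∈ Finset.Icc 1 d, (i:ℝ)^2 * S k i from rfl,
        hAdef, Finset.sum_div, ← Finset.sum_sub_distrib]
      refine Finset.sum_congr rfl fun i _ => ?_
      rw [mul_sub]
      congr 1
      rw [show 3*k+2 = 2 + 3*k by ring, pow_add]
      field_simp
    have hcden : (3:ℝ)^(k+1)*((Nat.factorial (k+1)):ℝ) = (((3*k+2:ℕ):ℝ)+1) * ck := by
      rw [Nat.factorial_succ, hckdef]
      push_cast; ring
    have hkey : S (k+1) d - (d:ℝ)^(3*(k+1))/((3:ℝ)^(k+1) * (Nat.factorial (k+1)))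
        = (∑ i ∈ Finset.Icc 1 d, (i:ℝ)^2 * (S k i - (i:ℝ)^(3*k)/ck))
          + (A - (d:ℝ)^(3*k+2+1)/(((3*k+2:ℕ):ℝ)+1))/ck := by
      rw [e1, hcden, show 3*(k+1) = 3*k+2+1 by ring]
      push_cast
      field_simp
      ring
    rw [hkey]
    have hT1 : |∑ i ∈ Finset.Icc 1 d, (i:ℝ)^2 * (S k i - (i:ℝ)^(3*k)/ck)|
        ≤ C * (d:ℝ)^(3*k+2) := by
      calc |∑ i ∈ Finset.Icc 1 d, (i:ℝ)^2 * (S k i - (i:ℝ)^(3*k)/ck)|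
          ≤ ∑ i ∈ Finset.Icc 1 d, |(i:ℝ)^2 * (S k i - (i:ℝ)^(3*k)/ck)| :=
            Finset.abs_sum_le_sum_abs _ _
        _ ≤ ∑ i ∈ Finset.Icc 1 d, C * (d:ℝ)^(3*k+1) := by
            refine Finset.sum_le_sum fun i hi => ?_
            obtain ⟨hi1, hi2⟩ := Finset.mem_Icc.mp hi
            have hi0 : (0:ℝ) < (i:ℝ) := by exact_mod_cast hi1
            have hid : (i:ℝ) ≤ (d:ℝ) := by exact_mod_cast hi2
            rw [abs_mul, abs_pow, abs_of_nonneg hi0.le]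
            calc (i:ℝ)^2 * |S k i - (i:ℝ)^(3*k)/ck|
                ≤ (i:ℝ)^2 * (C * (i:ℝ)^(3*k)/(i:ℝ)) := by
                  exact mul_le_mul_of_nonneg_left (hC i hi1) (by positivity)
              _ = C * (i:ℝ)^(3*k+1) := by
                  field_simp
                  ring
              _ ≤ C * (d:ℝ)^(3*k+1) :=
                  mul_le_mul_of_nonneg_left (pow_le_pow_left₀ hi0.le hid _) hC0
        _ = (d:ℝ) * (C * (d:ℝ)^(3*k+1)) := by
            rw [Finset.sum_const, Nat.card_Icc]
            simp [nsmul_eq_mul]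
        _ = C * (d:ℝ)^(3*k+2) := by ring
    have hT2 : |A - (d:ℝ)^(3*k+2+1)/(((3*k+2:ℕ):ℝ)+1)| ≤ 2^(3*k+2) * (d:ℝ)^(3*k+2) := by
      have := sum_pow_err (3*k+2) d hd
      push_cast at this ⊢
      exact this
    have hfin : (C + 2^(3*k+2)/ck) * (d:ℝ)^(3*(k+1))/(d:ℝ)
        = C * (d:ℝ)^(3*k+2) + (2^(3*k+2) * (d:ℝ)^(3*k+2))/ck := by
      rw [show 3*(k+1) = (3*k+2)+1 by ring, pow_succ]
      field_simp
      ring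
    rw [hfin]
    refine le_trans ((abs_add_le _ _).trans (le_of_eq (by rw [abs_div, abs_of_pos hck]))) ?_
    gcongr

noncomputable def Cc (k : ℕ) : ℝ := Classical.choose (S_bound k)

lemma Cc_nonneg (k : ℕ) : 0 ≤ Cc k := (Classical.choose_spec (S_bound k)).1

lemma Cc_spec (k d : ℕ) (hd : 1 ≤ d) :
    |S k d - (d:ℝ)^(3*k)/((3:ℝ)^k * (Nat.factorial k))| ≤ Cc k * (d:ℝ)^(3*k)/(d:ℝ) :=
  (Classical.choose_spec (S_bound k)).2 d hd

noncomputable def Bc (k : ℕ) : ℝ := 1/((3:ℝ)^k * (Nat.factorial k)) + Cc k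

lemma Bc_nonneg (k : ℕ) : 0 ≤ Bc k :=
  add_nonneg (by positivity) (Cc_nonneg k)

lemma S_le (k d : ℕ) (hd : 1 ≤ d) : |S k d| ≤ Bc k * (d:ℝ)^(3*k) := by
  have h := Cc_spec k d hd
  have hd1 : (1:ℝ) ≤ (d:ℝ) := by exact_mod_cast hd
  have hd0 : (0:ℝ) < (d:ℝ) := by linarith
  have hdiv : (d:ℝ)^(3*k)/(d:ℝ) ≤ (d:ℝ)^(3*k) := div_le_self (by positivity) hd1
  have hm : (0:ℝ) ≤ (d:ℝ)^(3*k)/((3:ℝ)^k * (Nat.factorial k)) := by positivity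
  calc |S k d| ≤ |S k d - (d:ℝ)^(3*k)/((3:ℝ)^k * (Nat.factorial k))|
        + |(d:ℝ)^(3*k)/((3:ℝ)^k * (Nat.factorial k))| := by
        have := abs_add_le (S k d - (d:ℝ)^(3*k)/((3:ℝ)^k * (Nat.factorial k)))
          ((d:ℝ)^(3*k)/((3:ℝ)^k * (Nat.factorial k)))
        simpa using this
    _ ≤ Cc k * (d:ℝ)^(3*k)/(d:ℝ) + (d:ℝ)^(3*k)/((3:ℝ)^k * (Nat.factorial k)) := by
        rw [abs_of_nonneg hm]; gcongr
    _ ≤ Cc k * (d:ℝ)^(3*k) + 1/((3:ℝ)^k * (Nat.factorial k)) * (d:ℝ)^(3*k) := by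
        have h1 : Cc k * (d:ℝ)^(3*k)/(d:ℝ) ≤ Cc k * (d:ℝ)^(3*k) := by
          rw [mul_div_assoc]
          exact mul_le_mul_of_nonneg_left hdiv (Cc_nonneg k)
        have h2 : (d:ℝ)^(3*k)/((3:ℝ)^k * (Nat.factorial k))
            = 1/((3:ℝ)^k * (Nat.factorial k)) * (d:ℝ)^(3*k) := by ring
        linarith [h2.le, h2.ge]
    _ = Bc k * (d:ℝ)^(3*k) := by rw [Bc]; ring

noncomputable def Dc (a b c : ℕ) : ℝ :=
  Cc a * (Bc b * Bc c) + 1/((3:ℝ)^a * (Nat.factorial a)) * (Cc b * Bc c)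
    + 1/((3:ℝ)^a * (Nat.factorial a)) * (1/((3:ℝ)^b * (Nat.factorial b))) * Cc c

lemma triple_bound (a b c d : ℕ) (hd : 1 ≤ d) :
    |S a d * S b d * S c d -
      (d:ℝ)^(3*a)/((3:ℝ)^a * (Nat.factorial a)) * ((d:ℝ)^(3*b)/((3:ℝ)^b * (Nat.factorial b))) *
        ((d:ℝ)^(3*c)/((3:ℝ)^c * (Nat.factorial c)))|
    ≤ Dc a b c * (d:ℝ)^(3*a+3*b+3*c)/(d:ℝ) := by
  have hd1 : (1:ℝ) ≤ (d:ℝ) := by exact_mod_cast hd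
  have hd0 : (0:ℝ) < (d:ℝ) := by linarith
  set ma : ℝ := (d:ℝ)^(3*a)/((3:ℝ)^a * (Nat.factorial a)) with hma
  set mb : ℝ := (d:ℝ)^(3*b)/((3:ℝ)^b * (Nat.factorial b)) with hmb
  set mc : ℝ := (d:ℝ)^(3*c)/((3:ℝ)^c * (Nat.factorial c)) with hmc
  have hmaub : |ma| ≤ 1/((3:ℝ)^a * (Nat.factorial a)) * (d:ℝ)^(3*a) := by
    rw [hma, abs_of_nonneg (by positivity)]; rw [div_eq_mul_inv]; ring_nf; rfl
  have hmbub : |mb| ≤ 1/((3:ℝ)^b * (Nat.factorial b)) * (d:ℝ)^(3*b) := by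
    rw [hmb, abs_of_nonneg (by positivity)]; rw [div_eq_mul_inv]; ring_nf; rfl
  have hsplit : S a d * S b d * S c d - ma * mb * mc
      = (S a d - ma) * S b d * S c d + ma * (S b d - mb) * S c d + ma * mb * (S c d - mc) := by
    ring
  rw [hsplit]
  have h1 : |(S a d - ma) * S b d * S c d|
      ≤ (Cc a * (d:ℝ)^(3*a)/(d:ℝ)) * (Bc b * (d:ℝ)^(3*b)) * (Bc c * (d:ℝ)^(3*c)) := by
    rw [abs_mul, abs_mul]
    have n1 : (0:ℝ) ≤ Cc a * (d:ℝ)^(3*a)/(d:ℝ) := by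
      have := Cc_nonneg a; positivity
    have n2 : (0:ℝ) ≤ Bc b * (d:ℝ)^(3*b) := by
      have := Bc_nonneg b; positivity
    exact mul_le_mul (mul_le_mul (Cc_spec a d hd) (S_le b d hd) (abs_nonneg _) n1)
      (S_le c d hd) (abs_nonneg _) (mul_nonneg n1 n2)
  have h2 : |ma * (S b d - mb) * S c d|
      ≤ (1/((3:ℝ)^a * (Nat.factorial a)) * (d:ℝ)^(3*a)) * (Cc b * (d:ℝ)^(3*b)/(d:ℝ))
          * (Bc c * (d:ℝ)^(3*c)) := by
    rw [abs_mul, abs_mul]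
    have n1 : (0:ℝ) ≤ 1/((3:ℝ)^a * (Nat.factorial a)) * (d:ℝ)^(3*a) := by positivity
    have n2 : (0:ℝ) ≤ Cc b * (d:ℝ)^(3*b)/(d:ℝ) := by have := Cc_nonneg b; positivity
    exact mul_le_mul (mul_le_mul hmaub (Cc_spec b d hd) (abs_nonneg _) n1)
      (S_le c d hd) (abs_nonneg _) (mul_nonneg n1 n2)
  have h3 : |ma * mb * (S c d - mc)|
      ≤ (1/((3:ℝ)^a * (Nat.factorial a)) * (d:ℝ)^(3*a))
          * (1/((3:ℝ)^b * (Nat.factorial b)) * (d:ℝ)^(3*b)) * (Cc c * (d:ℝ)^(3*c)/(d:ℝ)) := by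
    rw [abs_mul, abs_mul]
    have n1 : (0:ℝ) ≤ 1/((3:ℝ)^a * (Nat.factorial a)) * (d:ℝ)^(3*a) := by positivity
    have n2 : (0:ℝ) ≤ 1/((3:ℝ)^b * (Nat.factorial b)) * (d:ℝ)^(3*b) := by positivity
    exact mul_le_mul (mul_le_mul hmaub hmbub (abs_nonneg _) n1) (Cc_spec c d hd)
      (abs_nonneg _) (mul_nonneg n1 n2)
  have habs := (abs_add_le _ _).trans (add_le_add (abs_add_le ((S a d - ma) * S b d * S c d)
    (ma * (S b d - mb) * S c d)) (le_refl |ma * mb * (S c d - mc)|))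
  refine habs.trans ?_
  have hpow : (d:ℝ)^(3*a) * (d:ℝ)^(3*b) * (d:ℝ)^(3*c) = (d:ℝ)^(3*a+3*b+3*c) := by
    rw [pow_add, pow_add]
  have e1 : (Cc a * (d:ℝ)^(3*a)/(d:ℝ)) * (Bc b * (d:ℝ)^(3*b)) * (Bc c * (d:ℝ)^(3*c))
      = Cc a * (Bc b * Bc c) * (d:ℝ)^(3*a+3*b+3*c)/(d:ℝ) := by
    rw [← hpow]; field_simp
  have e2 : (1/((3:ℝ)^a * (Nat.factorial a)) * (d:ℝ)^(3*a)) * (Cc b * (d:ℝ)^(3*b)/(d:ℝ))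
        * (Bc c * (d:ℝ)^(3*c))
      = 1/((3:ℝ)^a * (Nat.factorial a)) * (Cc b * Bc c) * (d:ℝ)^(3*a+3*b+3*c)/(d:ℝ) := by
    rw [← hpow]; field_simp
  have e3 : (1/((3:ℝ)^a * (Nat.factorial a)) * (d:ℝ)^(3*a))
        * (1/((3:ℝ)^b * (Nat.factorial b)) * (d:ℝ)^(3*b)) * (Cc c * (d:ℝ)^(3*c)/(d:ℝ))
      = 1/((3:ℝ)^a * (Nat.factorial a)) * (1/((3:ℝ)^b * (Nat.factorial b))) * Cc c
          * (d:ℝ)^(3*a+3*b+3*c)/(d:ℝ) := by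
    rw [← hpow]; field_simp
  rw [e1] at h1; rw [e2] at h2; rw [e3] at h3
  have : Dc a b c * (d:ℝ)^(3*a+3*b+3*c)/(d:ℝ)
      = Cc a * (Bc b * Bc c) * (d:ℝ)^(3*a+3*b+3*c)/(d:ℝ)
        + 1/((3:ℝ)^a * (Nat.factorial a)) * (Cc b * Bc c) * (d:ℝ)^(3*a+3*b+3*c)/(d:ℝ)
        + 1/((3:ℝ)^a * (Nat.factorial a)) * (1/((3:ℝ)^b * (Nat.factorial b))) * Cc c
            * (d:ℝ)^(3*a+3*b+3*c)/(d:ℝ) := by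
    rw [Dc]; ring
  rw [this]
  linarith

/-- For fixed `δ ≥ 0`, summing over all ordered triples `(δ1, δ2, δ3)` of nonnegative
integers with `δ1 + δ2 + δ3 = δ`,
`Σ 6^{δ1} 4^{δ2} 2^{δ3} S_{δ1}(d) S_{δ2}(d) S_{δ3}(d) = (4d³)^δ/δ! + O(d^{3δ−1})`. -/
theorem stmt3 (δ : ℕ) :
    (fun d : ℕ =>
        (∑ δ1 ∈ Finset.range (δ + 1), ∑ δ2 ∈ Finset.range (δ - δ1 + 1),
          (6 : ℝ) ^ δ1 * 4 ^ δ2 * 2 ^ (δ - δ1 - δ2) *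
            S δ1 d * S δ2 d * S (δ - δ1 - δ2) d)
        - (4 * (d : ℝ) ^ 3) ^ δ / (Nat.factorial δ)) =O[atTop]
      fun d : ℕ => (d : ℝ) ^ ((3 * δ : ℤ) - 1) := by
  rw [isBigO_iff]
  refine ⟨∑ a ∈ Finset.range (δ+1), ∑ b ∈ Finset.range (δ-a+1),
    (6:ℝ)^a * 4^b * 2^(δ-a-b) * Dc a b (δ-a-b), ?_⟩
  filter_upwards [eventually_ge_atTop 1] with d hd
  have hd1 : (1:ℝ) ≤ (d:ℝ) := by exact_mod_cast hd
  have hd0 : (0:ℝ) < (d:ℝ) := by linarith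
  have hg : ((d:ℝ)) ^ ((3 * δ : ℤ) - 1) = (d:ℝ)^(3*δ)/(d:ℝ) := by
    rw [show ((3 * δ : ℤ) - 1) = ((3*δ:ℕ):ℤ) - 1 by push_cast; ring,
      zpow_sub₀ hd0.ne', zpow_one, zpow_natCast]
  have hgabs : ‖((d:ℝ)) ^ ((3 * δ : ℤ) - 1)‖ = (d:ℝ)^(3*δ)/(d:ℝ) := by
    rw [Real.norm_eq_abs, hg, abs_of_nonneg (by positivity)]
  rw [Real.norm_eq_abs, hgabs]
  rw [← main_sum δ d, ← Finset.sum_sub_distrib]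
  have hinner : ∀ a ∈ Finset.range (δ+1),
      (∑ b ∈ Finset.range (δ-a+1),
        (6:ℝ)^a * 4^b * 2^(δ-a-b) * S a d * S b d * S (δ-a-b) d)
      - (∑ b ∈ Finset.range (δ-a+1),
        (6:ℝ)^a * 4^b * 2^(δ-a-b) * ((d:ℝ)^(3*a)/((3:ℝ)^a * (Nat.factorial a))) *
          ((d:ℝ)^(3*b)/((3:ℝ)^b * (Nat.factorial b))) *
          ((d:ℝ)^(3*(δ-a-b))/((3:ℝ)^(δ-a-b) * (Nat.factorial (δ-a-b)))))
      = ∑ b ∈ Finset.range (δ-a+1),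
        ((6:ℝ)^a * 4^b * 2^(δ-a-b) * S a d * S b d * S (δ-a-b) d
          - (6:ℝ)^a * 4^b * 2^(δ-a-b) * ((d:ℝ)^(3*a)/((3:ℝ)^a * (Nat.factorial a))) *
            ((d:ℝ)^(3*b)/((3:ℝ)^b * (Nat.factorial b))) *
            ((d:ℝ)^(3*(δ-a-b))/((3:ℝ)^(δ-a-b) * (Nat.factorial (δ-a-b))))) :=
    fun a _ => (Finset.sum_sub_distrib _ _).symm
  rw [Finset.sum_congr rfl hinner]
  calc |∑ a ∈ Finset.range (δ+1), ∑ b ∈ Finset.range (δ-a+1),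
        ((6:ℝ)^a * 4^b * 2^(δ-a-b) * S a d * S b d * S (δ-a-b) d
          - (6:ℝ)^a * 4^b * 2^(δ-a-b) * ((d:ℝ)^(3*a)/((3:ℝ)^a * (Nat.factorial a))) *
            ((d:ℝ)^(3*b)/((3:ℝ)^b * (Nat.factorial b))) *
            ((d:ℝ)^(3*(δ-a-b))/((3:ℝ)^(δ-a-b) * (Nat.factorial (δ-a-b)))))|
      ≤ ∑ a ∈ Finset.range (δ+1), ∑ b ∈ Finset.range (δ-a+1),
        ((6:ℝ)^a * 4^b * 2^(δ-a-b) * Dc a b (δ-a-b)) * ((d:ℝ)^(3*δ)/(d:ℝ)) := by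
        refine (Finset.abs_sum_le_sum_abs _ _).trans (Finset.sum_le_sum fun a ha => ?_)
        refine (Finset.abs_sum_le_sum_abs _ _).trans (Finset.sum_le_sum fun b hb => ?_)
        rw [Finset.mem_range] at ha hb
        have hexp : 3*a+3*b+3*(δ-a-b) = 3*δ := by omega
        have hK : (0:ℝ) ≤ (6:ℝ)^a * 4^b * 2^(δ-a-b) := by positivity
        have hfact : (6:ℝ)^a * 4^b * 2^(δ-a-b) * S a d * S b d * S (δ-a-b) d
            - (6:ℝ)^a * 4^b * 2^(δ-a-b) * ((d:ℝ)^(3*a)/((3:ℝ)^a * (Nat.factorial a))) *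
              ((d:ℝ)^(3*b)/((3:ℝ)^b * (Nat.factorial b))) *
              ((d:ℝ)^(3*(δ-a-b))/((3:ℝ)^(δ-a-b) * (Nat.factorial (δ-a-b))))
            = (6:ℝ)^a * 4^b * 2^(δ-a-b) *
              (S a d * S b d * S (δ-a-b) d
                - (d:ℝ)^(3*a)/((3:ℝ)^a * (Nat.factorial a)) *
                  ((d:ℝ)^(3*b)/((3:ℝ)^b * (Nat.factorial b))) *
                  ((d:ℝ)^(3*(δ-a-b))/((3:ℝ)^(δ-a-b) * (Nat.factorial (δ-a-b))))) := by ring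
        rw [hfact, abs_mul, abs_of_nonneg hK]
        have := triple_bound a b (δ-a-b) d hd
        rw [hexp] at this
        calc (6:ℝ)^a * 4^b * 2^(δ-a-b) * |_| ≤ (6:ℝ)^a * 4^b * 2^(δ-a-b) *
              (Dc a b (δ-a-b) * (d:ℝ)^(3*δ)/(d:ℝ)) := mul_le_mul_of_nonneg_left this hK
          _ = ((6:ℝ)^a * 4^b * 2^(δ-a-b) * Dc a b (δ-a-b)) * ((d:ℝ)^(3*δ)/(d:ℝ)) := by ring
    _ = (∑ a ∈ Finset.range (δ+1), ∑ b ∈ Finset.range (δ-a+1),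
        (6:ℝ)^a * 4^b * 2^(δ-a-b) * Dc a b (δ-a-b)) * ((d:ℝ)^(3*δ)/(d:ℝ)) := by
        rw [Finset.sum_mul]
        refine Finset.sum_congr rfl fun a _ => ?_
        rw [Finset.sum_mul]
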